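/- Let A = S⁻¹ Σ S be a diagonalizable n×n complex matrix whose eigenvalues all have absolute value less than 1, and Q any n×n complex matrix. Then the matrix series Σ_{l=0}^∞ Aˡ Q (Aˡ)ᴴ converges and equals S⁻¹ ((S Q Sᴴ) ∘ M) S⁻ᴴ, where M_{ij} = (1 − σᵢ σⱼ*)⁻¹ and σᵢ are the eigenvalues of A (diagonal entries of Σ). -/

import Mathlib

open Matrix

/-- for diagonalizable `A = S⁻¹ (diag σ) S` with all `|σ i| < 1`,
`∑ l, A^l Q (A^l)ᴴ` converges and equals `S⁻¹ ((S Q Sᴴ) ∘ M) S⁻ᴴ`,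
`M i j = (1 - σ i (σ j)*)⁻¹`. -/
theorem dle_series_closed_form {n : ℕ} (S A Q : Matrix (Fin n) (Fin n) ℂ)
    (σ : Fin n → ℂ) (hS : IsUnit S) (hA : A = S⁻¹ * diagonal σ * S)
    (hσ : ∀ i, ‖σ i‖ < 1) :
    HasSum (fun l : ℕ => A ^ l * Q * (A ^ l)ᴴ)
      (S⁻¹ * Matrix.hadamard (S * Q * Sᴴ)
        (Matrix.of fun i j => (1 - σ i * star (σ j))⁻¹) * (Sᴴ)⁻¹) := by
  have hSS : S * S⁻¹ = 1 := mul_nonsing_inv S (isUnit_iff_isUnit_det S |>.mp hS)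
  set B := S * Q * Sᴴ with hB
  set f : ℕ → Matrix (Fin n) (Fin n) ℂ := fun l =>
    diagonal (fun i => σ i ^ l) * B * diagonal (fun i => star (σ i) ^ l) with hf
  have key : HasSum f (Matrix.hadamard B (Matrix.of fun i j => (1 - σ i * star (σ j))⁻¹)) := by
    refine Pi.hasSum.mpr ?_
    intro i
    rw [Pi.hasSum]
    intro j
    have he : ∀ l, f l i j = (σ i * star (σ j)) ^ l * B i j := by
      intro l
      simp [hf, diagonal_mul, mul_diagonal, mul_pow]
      ring
    simp only [he]
    have hx : ‖σ i * star (σ j)‖ < 1 := by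
      rw [norm_mul, norm_star]
      calc ‖σ i‖ * ‖σ j‖ ≤ 1 * ‖σ j‖ :=
            mul_le_mul_of_nonneg_right (hσ i).le (norm_nonneg _)
          _ = ‖σ j‖ := one_mul _
          _ < 1 := hσ j
    have := (hasSum_geometric_of_norm_lt_one hx).mul_right (B i j)
    simpa [hadamard, mul_comm] using this
  have key2 := (key.mul_left S⁻¹).mul_right (Sᴴ)⁻¹
  have hpow : ∀ l : ℕ, A ^ l * Q * (A ^ l)ᴴ = S⁻¹ * f l * (Sᴴ)⁻¹ := by
    intro l
    have hAl : A ^ l = S⁻¹ * diagonal (fun i => σ i ^ l) * S := by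
      induction l with
      | zero => simp [nonsing_inv_mul S (isUnit_iff_isUnit_det S |>.mp hS)]
      | succ k ih =>
        rw [pow_succ, ih, hA]
        have h2 : (S⁻¹ * diagonal (fun i => σ i ^ k) * S) * (S⁻¹ * diagonal σ * S)
            = S⁻¹ * (diagonal (fun i => σ i ^ k) * (S * S⁻¹) * diagonal σ) * S := by
          simp only [Matrix.mul_assoc]
        rw [h2, hSS, Matrix.mul_one, diagonal_mul_diagonal]
        simp [pow_succ]
    have hD : (diagonal (fun i => σ i ^ l))ᴴ = diagonal (fun i => star (σ i) ^ l) := by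
      ext i j
      by_cases h : i = j
      · subst h; simp [star_pow]
      · simp [diagonal_apply, h, Ne.symm h]
    rw [hAl]
    simp only [conjTranspose_mul, conjTranspose_nonsing_inv, hD, hf, hB,
      Matrix.mul_assoc]
  have hfun : (fun l : ℕ => A ^ l * Q * (A ^ l)ᴴ) = fun l => S⁻¹ * f l * (Sᴴ)⁻¹ :=
    funext hpow
  rw [hfun]
  exact key2
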